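/- Let B be a topological space, A ⊆ B a subspace, p : E_B → B a continuous map, and E_A ⊆ p⁻¹(A) a subspace. If there exists a relative section s of (E_B, E_A) → (B, A) (a continuous s : B → E_B with p ∘ s = id_B and s(A) ⊆ E_A), then the relative homotopy Euler class χ is trivial: there is a homotopy K : B × [0,1] → S_B E_B with q(K(b,t)) = b for all b and t, K(·,0) = σ₂, K(·,1) = σ₁, and K(a,t) ∈ S_{A,B}E_A for all a ∈ A and t ∈ [0,1]. -/

import Mathlib

open unitInterval

/-! Unreduced fiberwise suspension `S_B E_B` of `p : E → B`: the quotient of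
`(B × {0}) ⊔ (E × [0,1]) ⊔ (B × {1})` identifying `(e,0) ∼ (p e, 0)` and `(e,1) ∼ (p e, 1)`. -/

/-- The underlying type `B ⊔ (E × I) ⊔ B` before gluing. -/
abbrev SuspPre (B E : Type*) : Type _ := B ⊕ ((E × unitInterval) ⊕ B)

/-- The gluing relation for the unreduced fiberwise suspension. -/
def suspRel {E B : Type*} (p : E → B) : SuspPre B E → SuspPre B E → Prop := fun x y =>
  (∃ e : E, x = Sum.inl (p e) ∧ y = Sum.inr (Sum.inl (e, 0))) ∨
  (∃ e : E, x = Sum.inr (Sum.inr (p e)) ∧ y = Sum.inr (Sum.inl (e, 1)))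

/-- The unreduced fiberwise suspension `S_B E` (a quotient topological space). -/
abbrev FibSusp {E B : Type*} [TopologicalSpace E] [TopologicalSpace B] (p : E → B) : Type _ :=
  Quot (suspRel p)

/-- The projection `q : S_B E → B`. -/
def suspProj {E B : Type*} [TopologicalSpace E] [TopologicalSpace B] (p : E → B) :
    FibSusp p → B :=
  Quot.lift (fun x => match x with
    | Sum.inl b => b
    | Sum.inr (Sum.inl (e, _)) => p e
    | Sum.inr (Sum.inr b) => b)
  (by rintro x y (⟨e, rfl, rfl⟩ | ⟨e, rfl, rfl⟩) <;> rfl)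

/-- The section `σ₁ : B → S_B E`, the inclusion of `B × {0}`. -/
def suspSec₁ {E B : Type*} [TopologicalSpace E] [TopologicalSpace B] (p : E → B) :
    B → FibSusp p := fun b => Quot.mk _ (Sum.inl b)

/-- The section `σ₂ : B → S_B E`, the inclusion of `B × {1}`. -/
def suspSec₂ {E B : Type*} [TopologicalSpace E] [TopologicalSpace B] (p : E → B) :
    B → FibSusp p := fun b => Quot.mk _ (Sum.inr (Sum.inr b))

/-- The subspace `S_{A,B} E_A ⊆ S_B E`: the image of `(B × {0}) ⊔ (E_A × I) ⊔ (A × {1})`. -/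
def suspSubAB {E B : Type*} [TopologicalSpace E] [TopologicalSpace B] (p : E → B)
    (A : Set B) (EA : Set E) : Set (FibSusp p) :=
  Quot.mk (suspRel p) ''
    {x | (∃ b : B, x = Sum.inl b) ∨
         (∃ e ∈ EA, ∃ t : unitInterval, x = Sum.inr (Sum.inl (e, t))) ∨
         (∃ a ∈ A, x = Sum.inr (Sum.inr a))}

/-- If the pair `(E_B, E_A) → (B, A)` admits a relative section, then the
relative homotopy Euler class is trivial: the two canonical sections `σ₂` and `σ₁` of the
unreduced fiberwise suspension are homotopic over `B` through a homotopy carrying `A` into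
`S_{A,B} E_A`. -/
theorem stmt5 {E B : Type*} [TopologicalSpace E] [TopologicalSpace B]
    (p : E → B) (hp : Continuous p) (A : Set B) (EA : Set E) (hEA : ∀ e ∈ EA, p e ∈ A)
    (s : C(B, E)) (hsec : ∀ b, p (s b) = b) (hsA : ∀ a ∈ A, s a ∈ EA) :
    ∃ K : C(B × unitInterval, FibSusp p),
      (∀ b t, suspProj p (K (b, t)) = b) ∧
      (∀ b, K (b, 0) = suspSec₂ p b) ∧
      (∀ b, K (b, 1) = suspSec₁ p b) ∧
      (∀ a ∈ A, ∀ t, K (a, t) ∈ suspSubAB p A EA) := by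
  refine ⟨⟨fun bt => Quot.mk _ (Sum.inr (Sum.inl (s bt.1, unitInterval.symm bt.2))), ?_⟩, ?_,
    ?_, ?_, ?_⟩
  · exact continuous_quot_mk.comp (continuous_inr.comp (continuous_inl.comp
      ((s.continuous.comp continuous_fst).prodMk
        (unitInterval.continuous_symm.comp continuous_snd))))
  · intro b t; simp [suspProj, hsec]
  · intro b
    show Quot.mk _ (Sum.inr (Sum.inl (s b, unitInterval.symm 0))) = suspSec₂ p b
    rw [unitInterval.symm_zero]
    have := Quot.sound (r := suspRel p) (Or.inr ⟨s b, rfl, rfl⟩)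
    rw [hsec] at this
    exact this.symm
  · intro b
    show Quot.mk _ (Sum.inr (Sum.inl (s b, unitInterval.symm 1))) = suspSec₁ p b
    rw [unitInterval.symm_one]
    have := Quot.sound (r := suspRel p) (Or.inl ⟨s b, rfl, rfl⟩)
    rw [hsec] at this
    exact this.symm
  · intro a ha t
    exact ⟨Sum.inr (Sum.inl (s a, unitInterval.symm t)),
      Or.inr (Or.inl ⟨s a, hsA a ha, unitInterval.symm t, rfl⟩), rfl⟩
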